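/- Let Q ∈ ℂ[λ] with Q(i/2) = Q(-i/2) = 0 and suppose P ∈ ℂ[λ] satisfies P(λ + i/2)Q(λ - i/2) - P(λ - i/2)Q(λ + i/2) = λ^L with L odd. Then, setting Q'(λ) := Q(λ + i/2) - Q(λ - i/2) and P'(λ) := P(λ + i/2) - P(λ - i/2), the identity W₁(λ) := Q'(λ - i/2)P'(λ + i/2) - Q'(λ + i/2)P'(λ - i/2) = (λ + i/2)^L + (λ - i/2)^L - T₀(λ) holds, where T₀(λ) = P(λ + i)Q(λ - i) - P(λ - i)Q(λ + i). -/
import Mathlib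

open Complex Polynomial

lemma comp_shift_shift (f : Polynomial ℂ) (a b : ℂ) :
    (f.comp (X + C a)).comp (X + C b) = f.comp (X + C (a + b)) := by
  rw [Polynomial.comp_assoc]
  simp only [add_comp, X_comp, C_comp, C_add]
  congr 1
  ring

theorem W1_identity (L : ℕ) (P Q : Polynomial ℂ)
    (hW : P.comp (X + C (I / 2)) * Q.comp (X - C (I / 2)) -
          P.comp (X - C (I / 2)) * Q.comp (X + C (I / 2)) = X ^ L)
    (Q' P' W₁ T₀ : Polynomial ℂ)
    (hQ' : Q' = Q.comp (X + C (I / 2)) - Q.comp (X - C (I / 2)))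
    (hP' : P' = P.comp (X + C (I / 2)) - P.comp (X - C (I / 2)))
    (hW₁ : W₁ = Q'.comp (X - C (I / 2)) * P'.comp (X + C (I / 2)) -
                Q'.comp (X + C (I / 2)) * P'.comp (X - C (I / 2)))
    (hT₀ : T₀ = P.comp (X + C I) * Q.comp (X - C I) -
                P.comp (X - C I) * Q.comp (X + C I)) :
    W₁ = (X + C (I / 2)) ^ L + (X - C (I / 2)) ^ L - T₀ := by
  subst hQ' hP' hW₁ hT₀
  simp only [sub_eq_add_neg, ← C_neg] at *
  have h1 := congrArg (fun f => f.comp (X + C (I/2))) hW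
  have h2 := congrArg (fun f => f.comp (X + C (-(I/2)))) hW
  simp only [sub_comp, mul_comp, add_comp, neg_comp, pow_comp, X_comp,
    comp_shift_shift] at h1 h2 ⊢
  have e1 : I/2 + I/2 = I := by ring
  have e2 : I/2 + -(I/2) = (0:ℂ) := by ring
  have e3 : -(I/2) + I/2 = (0:ℂ) := by ring
  have e4 : -(I/2) + -(I/2) = -I := by ring
  simp only [e1, e2, e3, e4, map_zero, add_zero, comp_X] at h1 h2 ⊢
  linear_combination h1 + h2
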